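/- Let f : ℝ^n → ℝ be differentiable with gradient ∇f, let 0 < μ ≤ L, γ > 0, 0 ≤ α < 1, δ ≥ 0, and let g̃ satisfy the composite noise condition with parameters α, δ. Then for all x, z ∈ ℝ^n: (μ/4)·‖x − z + (2/μ)·g̃(z)‖² ≤ ⟪∇f(z), x − z⟫ + (μ/2)‖x − z‖² + (1/μ)·((1 + (1/4)(μ/(2L))^γ)(1+α)² + 2α²)·‖∇f(z)‖² + (1/μ)·(4(2L/μ)^γ + 3)·δ², and (μ/4)·‖x − z + (2/μ)·g̃(z)‖² ≥ ⟪∇f(z), x − z⟫ + (1/μ)·((1 − (1/4)(μ/(2L))^γ)(1−α)² − 2α²)·‖∇f(z)‖² − (1/μ)·(4(2L/μ)^γ + 1)·δ². -/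
import Mathlib
set_option maxHeartbeats 1000000

open scoped InnerProductSpace

lemma scalar_aux (μ α δ t T A B C D S : ℝ) (hμ : 0 < μ) (hα0 : 0 ≤ α) (hα1 : α < 1)
    (hδ : 0 ≤ δ) (hA : 0 ≤ A) (hB : 0 ≤ B) (hC : 0 ≤ C) (hD : 0 ≤ D)
    (ht : 0 < t) (ht1 : t ≤ 1) (htT : t * T = 1)
    (hS : |S| ≤ A * D) (hD' : D ≤ α * B + δ) (hCB : C ≤ B + D) (hBC : B ≤ C + D) :
    μ * S + C ^ 2 ≤ (μ ^ 2 / 4) * A ^ 2 + ((1 + t / 4) * (1 + α) ^ 2 + 2 * α ^ 2) * B ^ 2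
        + (4 * T + 3) * δ ^ 2 ∧
    ((1 - t / 4) * (1 - α) ^ 2 - 2 * α ^ 2) * B ^ 2 - (4 * T + 1) * δ ^ 2 ≤
      (μ ^ 2 / 4) * A ^ 2 + μ * S + C ^ 2 := by
  have hT1 : 1 ≤ T := by nlinarith
  have hkey : ∀ a : ℝ, 0 ≤ a → 2 * a * δ ≤ (t / 4) * a ^ 2 + 4 * T * δ ^ 2 := by
    intro a ha
    nlinarith [sq_nonneg (t * a - 4 * δ), ht, htT, mul_pos ht ht]
  have hs1 : S ≤ A * D := le_of_abs_le hS
  have hs2 : -S ≤ A * D := by have := neg_abs_le S; linarith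
  have hμAD : μ * (A * D) ≤ μ ^ 2 / 4 * A ^ 2 + D ^ 2 := by nlinarith [sq_nonneg (μ * A - 2 * D)]
  have hD2 : D ^ 2 ≤ 2 * α ^ 2 * B ^ 2 + 2 * δ ^ 2 := by
    nlinarith [mul_le_mul hD' hD' hD (by positivity), sq_nonneg (α * B - δ)]
  constructor
  · have hC1 : C ≤ (1 + α) * B + δ := by linarith
    have hC2 : C ^ 2 ≤ (1 + t / 4) * (1 + α) ^ 2 * B ^ 2 + (4 * T + 1) * δ ^ 2 := by
      have h1 := mul_le_mul hC1 hC1 hC (by positivity)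
      have h2 := hkey ((1 + α) * B) (by positivity)
      nlinarith
    have hμS : μ * S ≤ μ ^ 2 / 4 * A ^ 2 + D ^ 2 :=
      le_trans (by nlinarith [mul_le_mul_of_nonneg_left hs1 hμ.le]) hμAD
    nlinarith
  · have hμS : μ * (-S) ≤ μ ^ 2 / 4 * A ^ 2 + D ^ 2 :=
      le_trans (by nlinarith [mul_le_mul_of_nonneg_left hs2 hμ.le]) hμAD
    have hC2 : (1 - t / 4) * (1 - α) ^ 2 * B ^ 2 - (4 * T - 1) * δ ^ 2 ≤ C ^ 2 := by
      rcases le_or_gt ((1 - α) * B) δ with h | h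
      · have h1 : ((1 - α) * B) ^ 2 ≤ δ ^ 2 := pow_le_pow_left₀ (by nlinarith) h 2
        nlinarith [sq_nonneg C]
      · have h1 : (1 - α) * B - δ ≤ C := by nlinarith
        have h2 : ((1 - α) * B - δ) ^ 2 ≤ C ^ 2 := by nlinarith
        have h3 := hkey ((1 - α) * B) (by nlinarith)
        nlinarith
    nlinarith

/-- Quadratic estimation for the accelerated method with composite gradient noise. -/
theorem accelerated_quadratic_estimation {n : ℕ} (f : EuclideanSpace ℝ (Fin n) → ℝ)
    (f' g : EuclideanSpace ℝ (Fin n) → EuclideanSpace ℝ (Fin n))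
    (hgrad : ∀ x, HasGradientAt f (f' x) x)
    (μ L : ℝ) (hμ : 0 < μ) (hμL : μ ≤ L)
    (γ : ℝ) (hγ : 0 < γ)
    (α δ : ℝ) (hα0 : 0 ≤ α) (hα1 : α < 1) (hδ : 0 ≤ δ)
    (hnoise : ∀ x, ‖g x - f' x‖ ≤ α * ‖f' x‖ + δ) :
    ∀ x z : EuclideanSpace ℝ (Fin n),
      (μ / 4) * ‖x - z + (2 / μ) • g z‖ ^ 2 ≤
        ⟪f' z, x - z⟫_ℝ + (μ / 2) * ‖x - z‖ ^ 2
          + (1 / μ) * ((1 + (1 / 4) * (μ / (2 * L)) ^ γ) * (1 + α) ^ 2 + 2 * α ^ 2)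
              * ‖f' z‖ ^ 2
          + (1 / μ) * (4 * (2 * L / μ) ^ γ + 3) * δ ^ 2 ∧
      ⟪f' z, x - z⟫_ℝ
          + (1 / μ) * ((1 - (1 / 4) * (μ / (2 * L)) ^ γ) * (1 - α) ^ 2 - 2 * α ^ 2)
              * ‖f' z‖ ^ 2
          - (1 / μ) * (4 * (2 * L / μ) ^ γ + 1) * δ ^ 2 ≤
        (μ / 4) * ‖x - z + (2 / μ) • g z‖ ^ 2 := by
  intro x z
  have hL : 0 < L := lt_of_lt_of_le hμ hμL
  set t : ℝ := (μ / (2 * L)) ^ γ with htdef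
  set T : ℝ := (2 * L / μ) ^ γ with hTdef
  have ht : 0 < t := Real.rpow_pos_of_pos (by positivity) γ
  have ht1 : t ≤ 1 := Real.rpow_le_one (by positivity) (by rw [div_le_one (by positivity)]; linarith) hγ.le
  have htT : t * T = 1 := by
    rw [htdef, hTdef, ← Real.mul_rpow (by positivity) (by positivity),
      div_mul_div_comm, mul_comm, div_self (by positivity), Real.one_rpow]
  set A := ‖x - z‖ with hAdef
  set B := ‖f' z‖ with hBdef
  set C := ‖g z‖ with hCdef
  set D := ‖g z - f' z‖ with hDdef
  set S := ⟪x - z, g z - f' z⟫_ℝ with hSdef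
  have hS : |S| ≤ A * D := abs_real_inner_le_norm _ _
  have hD' : D ≤ α * B + δ := hnoise z
  have hCB : C ≤ B + D := by
    calc C = ‖f' z + (g z - f' z)‖ := by rw [add_sub_cancel]
    _ ≤ B + D := norm_add_le _ _
  have hBC : B ≤ C + D := by
    calc B = ‖g z - (g z - f' z)‖ := by rw [sub_sub_cancel]
    _ ≤ C + D := norm_sub_le _ _
  obtain ⟨k1, k2⟩ := scalar_aux μ α δ t T A B C D S hμ hα0 hα1 hδ (norm_nonneg _)
    (norm_nonneg _) (norm_nonneg _) (norm_nonneg _) ht ht1 htT hS hD' hCB hBC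
  have hexp : (μ / 4) * ‖x - z + (2 / μ) • g z‖ ^ 2
      = (μ / 4) * A ^ 2 + ⟪f' z, x - z⟫_ℝ + S + (1 / μ) * C ^ 2 := by
    rw [norm_add_sq_real, norm_smul, real_inner_smul_right]
    have h1 : ⟪x - z, g z⟫_ℝ = ⟪f' z, x - z⟫_ℝ + S := by
      rw [hSdef, inner_sub_right (𝕜 := ℝ) (x - z) (g z) (f' z), real_inner_comm (x - z) (f' z)]; ring
    rw [h1]
    rw [Real.norm_eq_abs, abs_of_pos (by positivity : (0:ℝ) < 2 / μ)]
    rw [mul_pow]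
    field_simp
    ring
  have hμne : μ ≠ 0 := hμ.ne'
  constructor
  · rw [hexp, ← sub_nonneg]
    have heq : ⟪f' z, x - z⟫_ℝ + (μ / 2) * A ^ 2
          + (1 / μ) * ((1 + (1 / 4) * t) * (1 + α) ^ 2 + 2 * α ^ 2) * B ^ 2
          + (1 / μ) * (4 * T + 3) * δ ^ 2
        - ((μ / 4) * A ^ 2 + ⟪f' z, x - z⟫_ℝ + S + (1 / μ) * C ^ 2)
        = (1 / μ) * ((μ ^ 2 / 4) * A ^ 2 + ((1 + t / 4) * (1 + α) ^ 2 + 2 * α ^ 2) * B ^ 2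
            + (4 * T + 3) * δ ^ 2 - (μ * S + C ^ 2)) := by
      field_simp; ring
    rw [heq]
    apply mul_nonneg (by positivity)
    linarith
  · rw [hexp, ← sub_nonneg]
    have heq : (μ / 4) * A ^ 2 + ⟪f' z, x - z⟫_ℝ + S + (1 / μ) * C ^ 2
        - (⟪f' z, x - z⟫_ℝ
            + (1 / μ) * ((1 - (1 / 4) * t) * (1 - α) ^ 2 - 2 * α ^ 2) * B ^ 2
            - (1 / μ) * (4 * T + 1) * δ ^ 2)
        = (1 / μ) * ((μ ^ 2 / 4) * A ^ 2 + μ * S + C ^ 2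
            - (((1 - t / 4) * (1 - α) ^ 2 - 2 * α ^ 2) * B ^ 2 - (4 * T + 1) * δ ^ 2)) := by
      field_simp; ring
    rw [heq]
    apply mul_nonneg (by positivity)
    linarith
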